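/- There is no homogeneous polynomial ℓ(x,y) of degree 2 in two real variables satisfying the equation 2(x³ ∂_x ℓ + y³ ∂_y ℓ) + 6x² ℓ + 2^{5/4}·(-y)·y³ = 0, i.e. the equation 2(x³,y³)·∇ℓ + 6x²ℓ − 2^{5/4} y⁴ = 0 has no solution ℓ ∈ P²_hom(ℝ²). Equivalently: writing ℓ = a x² + b xy + c y², matching coefficients forces a = b = 0 and then (4c − 2^{5/4}) y⁴ + 6c x² y² = 0, which is unsolvable. -/
import Mathlib


open MvPolynomial

/-- Any homogeneous polynomial of degree 2 in two variables is of the form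
`a x² + b xy + c y²`. -/
lemma homog_two_decomp (ℓ : MvPolynomial (Fin 2) ℝ) (h : ℓ.IsHomogeneous 2) :
    ℓ = C (coeff (Finsupp.single 0 2) ℓ) * X 0 ^ 2
      + C (coeff (Finsupp.single 0 1 + Finsupp.single 1 1) ℓ) * (X 0 * X 1)
      + C (coeff (Finsupp.single 1 2) ℓ) * X 1 ^ 2 := by
  apply MvPolynomial.ext
  intro d
  have hd : d = Finsupp.single 0 (d 0) + Finsupp.single 1 (d 1) := by
    ext i; fin_cases i <;> simp
  have hdeg : d.degree = d 0 + d 1 := by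
    rw [Finsupp.degree_eq_weight_one]
    simp [Finsupp.weight_apply, Finsupp.sum_fintype, Fin.sum_univ_two]
  by_cases h2 : d 0 + d 1 = 2
  · have h0 : d 0 ≤ 2 := by omega
    have key : ∀ i j : ℕ, d 0 = i → d 1 = j →
        d = Finsupp.single 0 i + Finsupp.single 1 j := by
      intro i j hi hj; rw [hd, hi, hj]
    interval_cases h0' : d 0
    · rw [key 0 2 rfl (by omega)]
      simp [X, monomial_mul, monomial_pow, coeff_monomial, coeff_add, coeff_C_mul,
        Finsupp.ext_iff, Fin.forall_fin_two]
    · rw [key 1 1 rfl (by omega)]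
      simp [X, monomial_mul, monomial_pow, coeff_monomial, coeff_add, coeff_C_mul,
        Finsupp.ext_iff, Fin.forall_fin_two]
    · rw [key 2 0 rfl (by omega)]
      simp [X, monomial_mul, monomial_pow, coeff_monomial, coeff_add, coeff_C_mul,
        Finsupp.ext_iff, Fin.forall_fin_two]
  · rw [h.coeff_eq_zero (by omega)]
    have : ∀ i j : ℕ, i + j = 2 → ¬ (Finsupp.single 0 i + Finsupp.single 1 j : Fin 2 →₀ ℕ) = d := by
      intro i j hij he
      apply h2
      have h0 : d 0 = i := by rw [← he]; simp
      have h1 : d 1 = j := by rw [← he]; simp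
      omega
    simp only [X, monomial_mul, monomial_pow, coeff_monomial, coeff_add, coeff_C_mul]
    rw [if_neg (by simpa using this 2 0 rfl), if_neg (this 1 1 rfl), if_neg (by simpa using this 0 2 rfl)]
    ring

/-- there is no homogeneous polynomial `ℓ` of degree `2` in two real
variables solving `2 (x³ ∂_x ℓ + y³ ∂_y ℓ) + 6 x² ℓ − 2^{5/4} y⁴ = 0`. -/
theorem eikonal_obstruction :
    ¬ ∃ ℓ : MvPolynomial (Fin 2) ℝ, ℓ.IsHomogeneous 2 ∧
      C (2 : ℝ) * (X 0 ^ 3 * pderiv 0 ℓ + X 1 ^ 3 * pderiv 1 ℓ)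
        + C (6 : ℝ) * (X 0 ^ 2 * ℓ)
        - C ((2 : ℝ) ^ ((5 : ℝ) / 4)) * X 1 ^ 4 = 0 := by
  rintro ⟨ℓ, hhom, heq⟩
  rw [homog_two_decomp ℓ hhom] at heq
  have k : (0:ℝ) < (2 : ℝ) ^ ((5 : ℝ) / 4) := by positivity
  have h1 := congrArg (eval ![(1:ℝ),0]) heq
  have h2 := congrArg (eval ![(0:ℝ),1]) heq
  have h3 := congrArg (eval ![(1:ℝ),1]) heq
  have h4 := congrArg (eval ![(1:ℝ),-1]) heq
  simp [pderiv_mul, pderiv_pow, pderiv_C, pderiv_X_self, pderiv_X_of_ne] at h1 h2 h3 h4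
  nlinarith [h1, h2, h3, h4, k]
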